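/- Let Z and Y be G-sets and let a, b: Z → Y be G-equivariant maps such that b = u*a for some G-equivariant map u: Z → G^c. Then a is bijective if and only if b is bijective. (Hence a morphism in the category of fused G-sets is an isomorphism if and only if any of its representatives is an isomorphism of G-sets.) -/

import Mathlib

/-- Let `Z`, `Y` be `G`-sets and `a, b : Z → Y` equivariant maps with `b = u*a` for some
equivariant `u : Z → G^c`. Then `a` is bijective iff `b` is bijective. -/
theorem stmt_4 (G Z Y : Type*) [Group G] [MulAction G Z] [MulAction G Y]
    (a b : Z → Y) (u : Z → G)
    (ha : ∀ (t : G) (z : Z), a (t • z) = t • a z)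
    (hb : ∀ (t : G) (z : Z), b (t • z) = t • b z)
    (hu : ∀ (t : G) (z : Z), u (t • z) = t * u z * t⁻¹)
    (hba : ∀ z : Z, b z = u z • a z) :
    Function.Bijective a ↔ Function.Bijective b := by
  set φ : Z → Z := fun z => u z • z with hφ
  set ψ : Z → Z := fun z => (u z)⁻¹ • z with hψ
  have huφ : ∀ z, u (φ z) = u z := by
    intro z; simp [hφ, hu, mul_assoc]
  have huψ : ∀ z, u (ψ z) = u z := by
    intro z; simp [hψ, hu, mul_assoc]
  have hφψ : ∀ z, φ (ψ z) = z := by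
    intro z; show u (ψ z) • ψ z = z; rw [huψ]; simp [hψ]
  have hψφ : ∀ z, ψ (φ z) = z := by
    intro z; show (u (φ z))⁻¹ • φ z = z; rw [huφ]; simp [hφ]
  have hφbij : Function.Bijective φ :=
    ⟨Function.LeftInverse.injective hψφ, Function.RightInverse.surjective hφψ⟩
  have hcomp : b = a ∘ φ := by
    funext z; simp [hφ, ha, ← hba]
  rw [hcomp]
  constructor
  · intro h; exact h.comp hφbij
  · intro h
    have : a = (a ∘ φ) ∘ ψ := by funext z; simp [hφψ]
    rw [this]
    exact h.comp ⟨Function.LeftInverse.injective hφψ, Function.RightInverse.surjective hψφ⟩
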